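/- Let (n,m,k,l) be natural numbers with m ≤ n−m, k ≤ n, m+k−n ≤ l and l ≤ min(m,k), and set M := m−l, N := n−m−k+l. Then for every integer x with 0 ≤ x ≤ m the following identity of rational numbers holds (equivalence of the Hahn presentation and the Racah presentation): ∑_{i=0}^{min(M,N)} C(M,i)·C(N,i)·[ ∑_{r=0}^{min(i,x)} ((−i)_r·(−x)_r·(x−n−1)_r)/(r!·(−m)_r·(m−n)_r) ] = C(n−k, m−l) · ∑_{r=0}^{min(x,M,N)} ((−x)_r·(x−n−1)_r·(−M)_r·(−N)_r)/(r!·(−m)_r·(m−n)_r·(−M−N)_r). -/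

import Mathlib

open Finset

/-- Rising factorial `(a)_r = a(a+1)⋯(a+r−1)` in `ℚ`. -/
noncomputable def risingFac (a : ℚ) (r : ℕ) : ℚ := ∏ j ∈ Finset.range r, (a + j)

/-- The terminating `₄F₃`-hypergeometric (Racah polynomial) sum
`∑_{r=0}^{min(x,M,N)} ((−x)_r (x−n−1)_r (−M)_r (−N)_r)/(r! (−m)_r (m−n)_r (−M−N)_r)`. -/
noncomputable def racahSum (n m M N x : ℕ) : ℚ :=
  ∑ r ∈ Finset.range (min x (min M N) + 1),
    risingFac (-(x : ℚ)) r * risingFac ((x : ℚ) - n - 1) r * risingFac (-(M : ℚ)) r *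
        risingFac (-(N : ℚ)) r /
      ((r.factorial : ℚ) * risingFac (-(m : ℚ)) r * risingFac ((m : ℚ) - n) r *
        risingFac (-((M : ℚ) + N)) r)

open Nat in
lemma risingFac_neg_nat (a r : ℕ) :
    risingFac (-(a : ℚ)) r = (-1) ^ r * (a.descFactorial r : ℚ) := by
  induction r with
  | zero => simp [risingFac]
  | succ r ih =>
    rw [risingFac, Finset.prod_range_succ, ← risingFac, ih, Nat.descFactorial_succ]
    rcases le_or_gt r a with h | h
    · push_cast [Nat.cast_sub h]
      ring
    · rw [Nat.descFactorial_of_lt h]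
      push_cast
      ring

lemma risingFac_neg_nat_eq_zero {a r : ℕ} (h : a < r) : risingFac (-(a : ℚ)) r = 0 := by
  rw [risingFac_neg_nat, Nat.descFactorial_of_lt h]; simp

open Nat in
lemma cast_descFac {n k : ℕ} (h : k ≤ n) :
    (n.descFactorial k : ℚ) = (n ! : ℚ) / ((n - k)! : ℚ) := by
  rw [eq_div_iff (by exact_mod_cast (Nat.factorial_ne_zero (n - k)))]
  exact_mod_cast (mul_comm ((n - k)!) (n.descFactorial k)) ▸ Nat.factorial_mul_descFactorial h

/-- The inner Vandermonde-type convolution. -/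
lemma sum_choose_mul_choose (M N r : ℕ) (hrM : r ≤ M) (hrN : r ≤ N) :
    ∑ j ∈ Finset.range (min M N + 1 - r), (M - r).choose j * N.choose (r + j)
      = (M + N - r).choose M := by
  have hV := Nat.add_choose_eq (M - r) N (N - r)
  rw [Finset.Nat.sum_antidiagonal_eq_sum_range_succ
      (fun a b => (M - r).choose a * N.choose b)] at hV
  have hsub : Finset.range (min M N + 1 - r) ⊆ Finset.range (N - r + 1) :=
    Finset.range_subset_range.2 (by omega)
  have h1 : ∑ j ∈ Finset.range (min M N + 1 - r), (M - r).choose j * N.choose (r + j)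
      = ∑ p ∈ Finset.range (N - r + 1), (M - r).choose p * N.choose (r + p) := by
    apply Finset.sum_subset hsub
    intro p hp hnp
    simp only [Finset.mem_range] at hp hnp
    have : M - r < p := by omega
    rw [Nat.choose_eq_zero_of_lt this, Nat.zero_mul]
  have h1' : ∑ p ∈ Finset.range (N - r + 1), (M - r).choose p * N.choose (r + p)
      = ∑ p ∈ Finset.range (N - r + 1), (M - r).choose p * N.choose (N - r - p) := by
    apply Finset.sum_congr rfl
    intro p hp
    simp only [Finset.mem_range] at hp
    congr 1
    have hpN : r + p ≤ N := by omega
    rw [show N - r - p = N - (r + p) by omega, Nat.choose_symm hpN]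
  rw [h1, h1']
  rw [← hV, show M - r + N = M + N - r by omega]
  rw [← Nat.choose_symm (show N - r ≤ M + N - r by omega),
    show M + N - r - (N - r) = M by omega]

-- Key natural-number identity: `∑ᵢ C(M,i) C(N,i) (i)ᵣ↓ = (M)ᵣ↓ C(M+N−r, M)`.
open Nat in
lemma sum_choose_descFac (M N r : ℕ) (hrM : r ≤ M) (hrN : r ≤ N) :
    ∑ i ∈ Finset.range (min M N + 1), M.choose i * N.choose i * i.descFactorial r
      = M.descFactorial r * (M + N - r).choose M := by
  have hsub : Finset.Ico r (min M N + 1) ⊆ Finset.range (min M N + 1) := by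
    rw [Finset.range_eq_Ico]; exact Finset.Ico_subset_Ico (Nat.zero_le _) le_rfl
  have h0 : ∑ i ∈ Finset.Ico r (min M N + 1), M.choose i * N.choose i * i.descFactorial r
      = ∑ i ∈ Finset.range (min M N + 1), M.choose i * N.choose i * i.descFactorial r := by
    apply Finset.sum_subset hsub
    intro i _ hni
    simp only [Finset.mem_Ico, not_and, not_lt] at hni
    rcases Nat.lt_or_ge i r with h | h
    · rw [Nat.descFactorial_of_lt h, Nat.mul_zero]
    · exact absurd (hni h) (by simp only [not_le]; exact (Finset.mem_range.1 ‹_›))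
  rw [← h0, Finset.sum_Ico_eq_sum_range]
  have h2 : ∀ j ∈ Finset.range (min M N + 1 - r),
      M.choose (r + j) * N.choose (r + j) * (r + j).descFactorial r
        = r ! * M.choose r * ((M - r).choose j * N.choose (r + j)) := by
    intro j hj
    simp only [Finset.mem_range] at hj
    have hrjM : r + j ≤ M := by omega
    have hcm := Nat.choose_mul (n := M) (Nat.le_add_right r j)
    rw [Nat.add_sub_cancel_left] at hcm
    rw [Nat.descFactorial_eq_factorial_mul_choose,
      show M.choose (r + j) * N.choose (r + j) * (r ! * (r + j).choose r)
        = M.choose (r + j) * (r + j).choose r * (N.choose (r + j) * r !) by ring, hcm]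
    ring
  rw [Finset.sum_congr rfl h2, ← Finset.mul_sum,
    sum_choose_mul_choose M N r hrM hrN, Nat.descFactorial_eq_factorial_mul_choose]

open Nat in
lemma descFac_choose (M N r : ℕ) (hrM : r ≤ M) (hrN : r ≤ N) :
    ((M + N - r).choose M : ℚ) * ((M + N).descFactorial r : ℚ)
      = ((M + N).choose M : ℚ) * (N.descFactorial r : ℚ) := by
  rw [cast_descFac (show r ≤ M + N by omega), cast_descFac hrN,
    Nat.cast_choose ℚ (show M ≤ M + N - r by omega),
    Nat.cast_choose ℚ (show M ≤ M + N by omega),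
    show M + N - r - M = N - r by omega, show M + N - M = N by omega]
  have f1 : ((M !) : ℚ) ≠ 0 := by exact_mod_cast Nat.factorial_ne_zero M
  have f2 : (((N - r)!) : ℚ) ≠ 0 := by exact_mod_cast Nat.factorial_ne_zero (N - r)
  have f3 : (((M + N - r)!) : ℚ) ≠ 0 := by exact_mod_cast Nat.factorial_ne_zero (M + N - r)
  have f4 : ((N !) : ℚ) ≠ 0 := by exact_mod_cast Nat.factorial_ne_zero N
  field_simp

/-- The key `ℚ`-identity after swapping sums. -/
lemma key (M N r : ℕ) (hrM : r ≤ M) (hrN : r ≤ N) :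
    ∑ i ∈ Finset.range (min M N + 1),
        (M.choose i : ℚ) * (N.choose i : ℚ) * risingFac (-(i : ℚ)) r
      = ((M + N).choose M : ℚ) * risingFac (-(M : ℚ)) r * risingFac (-(N : ℚ)) r
          / risingFac (-((M : ℚ) + N)) r := by
  have hMN : -((M : ℚ) + N) = -(((M + N : ℕ) : ℚ)) := by push_cast; ring
  rw [hMN]
  simp only [risingFac_neg_nat]
  have hd : ((M + N).descFactorial r : ℚ) ≠ 0 := by
    have : (M + N).descFactorial r ≠ 0 := by
      simp only [ne_eq, Nat.descFactorial_eq_zero_iff_lt]; omega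
    exact_mod_cast this
  have hNat := sum_choose_descFac M N r hrM hrN
  have hQ : ∑ i ∈ Finset.range (min M N + 1),
      (M.choose i : ℚ) * (N.choose i : ℚ) * (i.descFactorial r : ℚ)
      = (M.descFactorial r : ℚ) * ((M + N - r).choose M : ℚ) := by
    exact_mod_cast congrArg (fun t : ℕ => (t : ℚ)) hNat
  have e1 : ∑ i ∈ Finset.range (min M N + 1),
      (M.choose i : ℚ) * (N.choose i : ℚ) * ((-1 : ℚ) ^ r * (i.descFactorial r : ℚ))
      = (-1 : ℚ) ^ r * ∑ i ∈ Finset.range (min M N + 1),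
          (M.choose i : ℚ) * (N.choose i : ℚ) * (i.descFactorial r : ℚ) := by
    rw [Finset.mul_sum]
    exact Finset.sum_congr rfl (fun i _ => by ring)
  rw [e1, hQ, eq_div_iff (mul_ne_zero (pow_ne_zero _ (by norm_num)) hd)]
  linear_combination ((-1 : ℚ) ^ r) ^ 2 * (M.descFactorial r : ℚ) *
    descFac_choose M N r hrM hrN

/-- **Equivalence of the Hahn presentation and the Racah presentation** of the pmf
`p(x | n,m,k,l)`: with `M := m−l`, `N := n−m−k+l`,
`∑_{i=0}^{min(M,N)} C(M,i) C(N,i) ₃F₂(−i,−x,x−n−1;−m,m−n;1)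
  = C(n−k,m−l) ₄F₃(−x,x−n−1,−M,−N;−m,m−n,−M−N;1)`. -/
theorem hahn_presentation_eq_racah_presentation
    (n m k l : ℕ) (hm : 2 * m ≤ n) (hk : k ≤ n) (hl : m + k ≤ n + l)
    (hlm : l ≤ m) (hlk : l ≤ k) (x : ℕ) (hx : x ≤ m) :
    ∑ i ∈ Finset.range (min (m - l) (n + l - m - k) + 1),
      ((m - l).choose i : ℚ) * ((n + l - m - k).choose i : ℚ) *
        ∑ r ∈ Finset.range (min i x + 1),
          risingFac (-(i : ℚ)) r * risingFac (-(x : ℚ)) r * risingFac ((x : ℚ) - n - 1) r /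
            ((r.factorial : ℚ) * risingFac (-(m : ℚ)) r * risingFac ((m : ℚ) - n) r)
    = ((n - k).choose (m - l) : ℚ) * racahSum n m (m - l) (n + l - m - k) x := by
  set M := m - l with hMdef
  set N := n + l - m - k with hNdef
  set T := min x (min M N) with hTdef
  have hMN : M + N = n - k := by omega
  -- step 1: enlarge each inner sum to a common range
  have step1 : ∀ i ∈ Finset.range (min M N + 1),
      (M.choose i : ℚ) * (N.choose i : ℚ) *
        ∑ r ∈ Finset.range (min i x + 1),
          risingFac (-(i : ℚ)) r * risingFac (-(x : ℚ)) r * risingFac ((x : ℚ) - n - 1) r /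
            ((r.factorial : ℚ) * risingFac (-(m : ℚ)) r * risingFac ((m : ℚ) - n) r)
      = ∑ r ∈ Finset.range (T + 1),
          (M.choose i : ℚ) * (N.choose i : ℚ) *
          (risingFac (-(i : ℚ)) r * risingFac (-(x : ℚ)) r * risingFac ((x : ℚ) - n - 1) r /
            ((r.factorial : ℚ) * risingFac (-(m : ℚ)) r * risingFac ((m : ℚ) - n) r)) := by
    intro i hi
    simp only [Finset.mem_range] at hi
    rw [Finset.mul_sum]
    apply Finset.sum_subset
    · apply Finset.range_subset_range.2; omega
    · intro r hr hnr
      simp only [Finset.mem_range] at hr hnr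
      rcases Nat.lt_or_ge i r with h | h
      · rw [risingFac_neg_nat_eq_zero h]; simp
      · have : x < r := by omega
        rw [risingFac_neg_nat_eq_zero this]; simp
  rw [Finset.sum_congr rfl step1, Finset.sum_comm]
  -- step 2: evaluate the inner sum over i for each fixed r
  have step2 : ∀ r ∈ Finset.range (T + 1),
      ∑ i ∈ Finset.range (min M N + 1),
        (M.choose i : ℚ) * (N.choose i : ℚ) *
          (risingFac (-(i : ℚ)) r * risingFac (-(x : ℚ)) r * risingFac ((x : ℚ) - n - 1) r /
            ((r.factorial : ℚ) * risingFac (-(m : ℚ)) r * risingFac ((m : ℚ) - n) r))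
      = ((n - k).choose M : ℚ) *
          (risingFac (-(x : ℚ)) r * risingFac ((x : ℚ) - n - 1) r * risingFac (-(M : ℚ)) r *
            risingFac (-(N : ℚ)) r /
          ((r.factorial : ℚ) * risingFac (-(m : ℚ)) r * risingFac ((m : ℚ) - n) r *
            risingFac (-((M : ℚ) + N)) r)) := by
    intro r hr
    simp only [Finset.mem_range] at hr
    have hrM : r ≤ M := by omega
    have hrN : r ≤ N := by omega
    have e2 : ∀ i ∈ Finset.range (min M N + 1),
        (M.choose i : ℚ) * (N.choose i : ℚ) *
          (risingFac (-(i : ℚ)) r * risingFac (-(x : ℚ)) r * risingFac ((x : ℚ) - n - 1) r /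
            ((r.factorial : ℚ) * risingFac (-(m : ℚ)) r * risingFac ((m : ℚ) - n) r))
        = ((M.choose i : ℚ) * (N.choose i : ℚ) * risingFac (-(i : ℚ)) r) *
          (risingFac (-(x : ℚ)) r * risingFac ((x : ℚ) - n - 1) r /
            ((r.factorial : ℚ) * risingFac (-(m : ℚ)) r * risingFac ((m : ℚ) - n) r)) := by
      intro i _; ring
    rw [Finset.sum_congr rfl e2, ← Finset.sum_mul, key M N r hrM hrN, ← hMN]
    ring
  rw [Finset.sum_congr rfl step2, racahSum, ← hTdef, Finset.mul_sum]
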